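/- Let T be a tree on n ≥ 4 vertices with L leaves and S support vertices. Then γ^LD(T) ≥ (n + 1 + 2(L − S))/3. -/

import Mathlib

open Finset

variable {V : Type*}

/-- `D` is a locating-dominating set of `G`: it is dominating, and distinct
vertices outside `D` have distinct open neighborhood traces on `D`. -/
def IsLD [DecidableEq V] [Fintype V] (G : SimpleGraph V) [DecidableRel G.Adj]
    (D : Finset V) : Prop :=
  (∀ x : V, ((insert x (G.neighborFinset x)) ∩ D).Nonempty) ∧
  ∀ x ∉ D, ∀ y ∉ D, x ≠ y → G.neighborFinset x ∩ D ≠ G.neighborFinset y ∩ D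

/-- The location-domination number `γ^LD(G)`. -/
noncomputable def gammaLD [DecidableEq V] [Fintype V] (G : SimpleGraph V)
    [DecidableRel G.Adj] : ℕ :=
  sInf {k | ∃ D : Finset V, IsLD G D ∧ D.card = k}

section Aux

variable [DecidableEq V] [Fintype V] (G : SimpleGraph V) [DecidableRel G.Adj]

/-- The unique neighbor of a leaf (junk value otherwise). -/
noncomputable def supFn (v : V) : V :=
  if h : (G.neighborFinset v).Nonempty then h.choose else v

variable {G}

lemma supFn_adj {v : V} (h : G.degree v = 1) : G.Adj v (supFn G v) := by
  have hne : (G.neighborFinset v).Nonempty := by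
    rw [← Finset.card_pos]; change 0 < G.degree v; omega
  rw [supFn, dif_pos hne]
  have := hne.choose_spec
  rwa [SimpleGraph.mem_neighborFinset] at this

lemma supFn_unique {v w : V} (h : G.degree v = 1) (hw : G.Adj v w) : w = supFn G v := by
  have h1 : (G.neighborFinset v).card = 1 := h
  obtain ⟨a, ha⟩ := Finset.card_eq_one.mp h1
  have hwa : w = a := by
    have : w ∈ G.neighborFinset v := by rwa [SimpleGraph.mem_neighborFinset]
    rw [ha] at this; simpa using this
  have hsa : supFn G v = a := by
    have : supFn G v ∈ G.neighborFinset v := by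
      rw [SimpleGraph.mem_neighborFinset]; exact supFn_adj h
    rw [ha] at this; simpa using this
  rw [hwa, hsa]

lemma nf_eq_supFn {v : V} (h : G.degree v = 1) :
    G.neighborFinset v = {supFn G v} := by
  have h1 : (G.neighborFinset v).card = 1 := h
  obtain ⟨a, ha⟩ := Finset.card_eq_one.mp h1
  have : supFn G v ∈ G.neighborFinset v := by
    rw [SimpleGraph.mem_neighborFinset]; exact supFn_adj h
  rw [ha] at this ⊢
  simp_all

lemma no_adj_leaves (hT : G.Connected) (hn : 4 ≤ Fintype.card V) {u v : V}
    (hu : G.degree u = 1) (hv : G.degree v = 1) : ¬ G.Adj u v := by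
  intro hadj
  have hvs : v = supFn G u := supFn_unique hu hadj
  have hus : u = supFn G v := supFn_unique hv hadj.symm
  have key : ∀ {a w : V} (_ : G.Walk a w), a = u ∨ a = v → w = u ∨ w = v := by
    intro a w p
    induction p with
    | nil => exact id
    | @cons a b w hab q ih =>
      intro ha
      apply ih
      rcases ha with rfl | rfl
      · right; rw [supFn_unique hu hab, ← hvs]
      · left; rw [supFn_unique hv hab, ← hus]
  have hall : ∀ w : V, w = u ∨ w = v := by
    intro w
    obtain ⟨p⟩ := hT.preconnected u w
    exact key p (Or.inl rfl)
  have : (Finset.univ : Finset V) ⊆ {u, v} := by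
    intro w _
    rcases hall w with rfl | rfl <;> simp
  have := Finset.card_le_card this
  have h2 : ({u, v} : Finset V).card ≤ 2 := Finset.card_insert_le _ _ |>.trans (by simp)
  rw [Finset.card_univ] at this
  omega

variable (G)

/-- Set of leaves. -/
def leaves : Finset V := univ.filter (fun v => G.degree v = 1)

/-- Set of support vertices. -/
def supps : Finset V := univ.filter (fun v : V => ∃ u, G.Adj v u ∧ G.degree u = 1)

/-- Leaves attached to `s`. -/
noncomputable def fib (s : V) : Finset V := (leaves G).filter (fun l => supFn G l = s)

variable {G}

lemma mem_leaves {v : V} : v ∈ leaves G ↔ G.degree v = 1 := by simp [leaves]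

lemma mem_fib {s l : V} : l ∈ fib G s ↔ G.degree l = 1 ∧ supFn G l = s := by
  simp [fib, mem_leaves]

lemma fib_supFn_adj {s l : V} (h : l ∈ fib G s) : G.Adj s l := by
  rw [mem_fib] at h
  have := supFn_adj h.1
  rw [h.2] at this
  exact this.symm

lemma supFn_mem_supps {l : V} (h : l ∈ leaves G) : supFn G l ∈ supps G := by
  rw [mem_leaves] at h
  simp only [supps, mem_filter, mem_univ, true_and]
  exact ⟨l, (supFn_adj h).symm, h⟩

lemma mem_supps_iff {s : V} : s ∈ supps G ↔ ∃ u, G.Adj s u ∧ G.degree u = 1 := by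
  simp [supps]

lemma fib_nonempty {s : V} (h : s ∈ supps G) : (fib G s).Nonempty := by
  rw [mem_supps_iff] at h
  obtain ⟨u, hadj, hdeg⟩ := h
  exact ⟨u, mem_fib.mpr ⟨hdeg, (supFn_unique hdeg hadj.symm).symm⟩⟩

/-- A chosen leaf of `s`, preferring one outside `D`. -/
noncomputable def pick (G : SimpleGraph V) [DecidableRel G.Adj] (D : Finset V) (s : V) : V :=
  if h : ((fib G s) \ D).Nonempty then h.choose
  else if h2 : (fib G s).Nonempty then h2.choose else s

variable (G)

/-- Main counting lemma: the bound for an arbitrary LD-set. -/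
lemma key_bound (hT : G.IsTree) (hn : 4 ≤ Fintype.card V) (D : Finset V)
    (hD : IsLD G D) :
    Fintype.card V + 1 + 2 * (leaves G).card ≤ 3 * D.card + 2 * (supps G).card := by
  classical
  set n := Fintype.card V with hn'
  set t : V → Finset V := fun x => G.neighborFinset x ∩ D with ht
  have h_dom : ∀ x ∉ D, (t x).Nonempty := by
    intro x hx
    obtain ⟨y, hy⟩ := hD.1 x
    rw [mem_inter, mem_insert] at hy
    rcases hy.1 with rfl | hynf
    · exact absurd hy.2 hx
    · exact ⟨y, mem_inter.mpr ⟨hynf, hy.2⟩⟩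
  have h_loc := hD.2
  set A : Finset V := Dᶜ with hA
  have hmemA : ∀ x, x ∈ A ↔ x ∉ D := fun x => Finset.mem_compl
  set A1 : Finset V := A.filter (fun x => (t x).card = 1) with hA1
  set A2 : Finset V := A.filter (fun x => 2 ≤ (t x).card) with hA2
  set k : V → ℕ := fun s => (fib G s).card with hk
  set SD : Finset V := supps G ∩ D with hSD
  set SA1 : Finset V := supps G ∩ A1 with hSA1
  set SA2 : Finset V := supps G ∩ A2 with hSA2
  -- basic membership facts
  have hA1D : ∀ x ∈ A1, x ∉ D := fun x hx => (hmemA x).mp (mem_filter.mp hx).1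
  have hA2D : ∀ x ∈ A2, x ∉ D := fun x hx => (hmemA x).mp (mem_filter.mp hx).1
  have hdisA12 : Disjoint A1 A2 := by
    rw [Finset.disjoint_left]
    intro x hx1 hx2
    have h1 := (mem_filter.mp hx1).2
    have h2 := (mem_filter.mp hx2).2
    omega
  have hunionA : A1 ∪ A2 = A := by
    apply Finset.Subset.antisymm
    · exact Finset.union_subset (filter_subset _ _) (filter_subset _ _)
    · intro x hx
      have hne := h_dom x ((hmemA x).mp hx)
      have hpos : 1 ≤ (t x).card := Finset.card_pos.mpr hne
      rcases Nat.lt_or_ge (t x).card 2 with h | h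
      · exact Finset.mem_union_left _ (mem_filter.mpr ⟨hx, by omega⟩)
      · exact Finset.mem_union_right _ (mem_filter.mpr ⟨hx, h⟩)
  have hAcard : A1.card + A2.card = A.card := by
    rw [← hunionA, Finset.card_union_of_disjoint hdisA12]
  have hnA : D.card + A.card = n := by
    have h1 : A.card = Fintype.card V - D.card := by rw [hA, Finset.card_compl]
    have h2 : D.card ≤ Fintype.card V := Finset.card_le_univ D
    omega
  -- leaf facts
  have hleafD : ∀ l, G.degree l = 1 → l ∉ D → supFn G l ∈ D := by
    intro l hl hlD
    obtain ⟨y, hy⟩ := h_dom l hlD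
    rw [ht] at hy
    simp only [mem_inter] at hy
    have : y ∈ G.neighborFinset l := hy.1
    rw [nf_eq_supFn hl, Finset.mem_singleton] at this
    rw [← this]
    exact hy.2
  have hfibD : ∀ s, s ∉ D → ∀ l ∈ fib G s, l ∈ D := by
    intro s hs l hl
    rw [mem_fib] at hl
    by_contra hlD
    exact hs (hl.2 ▸ hleafD l hl.1 hlD)
  have hfib_sub_t : ∀ s, s ∉ D → fib G s ⊆ t s := by
    intro s hs l hl
    rw [ht]
    simp only [mem_inter, SimpleGraph.mem_neighborFinset]
    exact ⟨fib_supFn_adj hl, hfibD s hs l hl⟩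
  -- counting leaves fiberwise
  have hL : (leaves G).card = ∑ s ∈ supps G, k s :=
    Finset.card_eq_sum_card_fiberwise (fun l hl => supFn_mem_supps hl)
  have hkpos : ∀ s ∈ supps G, 1 ≤ k s := fun s hs =>
    Finset.card_pos.mpr (fib_nonempty hs)
  have hk1 : ∀ s ∈ SA1, k s = 1 := by
    intro s hs
    rw [hSA1, mem_inter] at hs
    have hsub := hfib_sub_t s (hA1D s hs.2)
    have hcards : (t s).card = 1 := (mem_filter.mp hs.2).2
    have hle : k s ≤ (t s).card := Finset.card_le_card hsub
    have hge := hkpos s hs.1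
    omega
  have hsuppsplit : supps G = SD ∪ (SA1 ∪ SA2) := by
    apply Finset.Subset.antisymm
    · intro s hs
      by_cases hsD : s ∈ D
      · exact Finset.mem_union_left _ (mem_inter.mpr ⟨hs, hsD⟩)
      · have : s ∈ A1 ∪ A2 := hunionA ▸ (hmemA s).mpr hsD
        rcases Finset.mem_union.mp this with h | h
        · exact Finset.mem_union_right _ (Finset.mem_union_left _ (mem_inter.mpr ⟨hs, h⟩))
        · exact Finset.mem_union_right _ (Finset.mem_union_right _ (mem_inter.mpr ⟨hs, h⟩))
    · intro s hs
      rcases Finset.mem_union.mp hs with h | h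
      · exact (mem_inter.mp h).1
      · rcases Finset.mem_union.mp h with h' | h' <;> exact (mem_inter.mp h').1
  have hdisSDSA1 : Disjoint SD (SA1 ∪ SA2) := by
    rw [Finset.disjoint_left]
    intro s hs hs'
    have hsD := (mem_inter.mp hs).2
    rcases Finset.mem_union.mp hs' with h | h
    · exact hA1D s (mem_inter.mp h).2 hsD
    · exact hA2D s (mem_inter.mp h).2 hsD
  have hdisSA12 : Disjoint SA1 SA2 := by
    rw [Finset.disjoint_left]
    intro s hs hs'
    exact (Finset.disjoint_left.mp hdisA12) (mem_inter.mp hs).2 (mem_inter.mp hs').2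
  have hLS : (leaves G).card = (supps G).card + (∑ s ∈ SD, (k s - 1)) + (∑ s ∈ SA2, (k s - 1)) := by
    have e1 : ∑ s ∈ supps G, k s = ∑ s ∈ supps G, (1 + (k s - 1)) :=
      Finset.sum_congr rfl (fun s hs => by have := hkpos s hs; omega)
    have hsum0 : ∑ s ∈ supps G, (k s - 1) =
        ∑ s ∈ SD, (k s - 1) + (∑ s ∈ SA1, (k s - 1) + ∑ s ∈ SA2, (k s - 1)) := by
      rw [hsuppsplit, Finset.sum_union hdisSDSA1, Finset.sum_union hdisSA12]
    have hSA1zero : ∑ s ∈ SA1, (k s - 1) = 0 :=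
      Finset.sum_eq_zero (fun s hs => by have := hk1 s hs; omega)
    rw [hL, e1, Finset.sum_add_distrib, Finset.sum_const, smul_eq_mul, mul_one]
    omega
  -- at most one leaf of a support in D lies outside D
  have hG1 : ∀ s ∈ D, ((fib G s) \ D).card ≤ 1 := by
    intro s hsD
    rw [Finset.card_le_one]
    intro l1 h1 l2 h2
    by_contra hne
    rw [Finset.mem_sdiff] at h1 h2
    have hl1 := mem_fib.mp h1.1
    have hl2 := mem_fib.mp h2.1
    have ht1 : t l1 = {s} := by
      rw [ht]
      show G.neighborFinset l1 ∩ D = {s}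
      rw [nf_eq_supFn hl1.1, hl1.2]
      exact Finset.singleton_inter_of_mem hsD
    have ht2 : t l2 = {s} := by
      rw [ht]
      show G.neighborFinset l2 ∩ D = {s}
      rw [nf_eq_supFn hl2.1, hl2.2]
      exact Finset.singleton_inter_of_mem hsD
    exact h_loc l1 h1.2 l2 h2.2 hne (show t l1 = t l2 by rw [ht1, ht2])
  -- edge counting
  set P : Finset (V × V) := A.biUnion (fun x => (t x).image (fun y => (x, y))) with hP
  have hPmem : ∀ p : V × V, p ∈ P ↔ p.1 ∈ A ∧ p.2 ∈ t p.1 := by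
    intro p
    rw [hP, Finset.mem_biUnion]
    constructor
    · rintro ⟨x, hx, hp⟩
      rw [Finset.mem_image] at hp
      obtain ⟨y, hy, rfl⟩ := hp
      exact ⟨hx, hy⟩
    · rintro ⟨h1, h2⟩
      exact ⟨p.1, h1, Finset.mem_image.mpr ⟨p.2, h2, rfl⟩⟩
  have hPcard : P.card = ∑ x ∈ A, (t x).card := by
    rw [hP, Finset.card_biUnion]
    · exact Finset.sum_congr rfl
        (fun x _ => Finset.card_image_of_injective _ (fun a b h => by simpa using h))
    · intro x hx y hy hxy
      rw [Function.onFun, Finset.disjoint_left]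
      intro p hp hp'
      rw [Finset.mem_image] at hp hp'
      obtain ⟨a, _, rfl⟩ := hp
      obtain ⟨b, _, h⟩ := hp'
      exact hxy (by simpa using congrArg Prod.fst h.symm)
  set Q : Finset V := (leaves G).filter (fun l => l ∈ D ∧ supFn G l ∈ D) with hQ
  have hEdge : P.card + Q.card + 1 ≤ n := by
    have f1inj : Set.InjOn (fun p : V × V => s(p.1, p.2)) P := by
      intro p hp q hq hpq
      rw [Finset.mem_coe, hPmem] at hp hq
      simp only [Sym2.eq_iff] at hpq
      have hp2 : p.2 ∈ D := (Finset.mem_inter.mp hp.2).2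
      have hq2 : q.2 ∈ D := (Finset.mem_inter.mp hq.2).2
      have hp1 : p.1 ∉ D := (hmemA _).mp hp.1
      rcases hpq with ⟨h1, h2⟩ | ⟨h1, h2⟩
      · exact Prod.ext h1 h2
      · rw [← h1] at hq2
        exact absurd hq2 hp1
    have f2inj : Set.InjOn (fun l => s(l, supFn G l)) Q := by
      intro l1 h1 l2 h2 h
      rw [Finset.mem_coe, hQ, Finset.mem_filter] at h1 h2
      have hl1 : G.degree l1 = 1 := mem_leaves.mp h1.1
      have hl2 : G.degree l2 = 1 := mem_leaves.mp h2.1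
      simp only [Sym2.eq_iff] at h
      rcases h with ⟨h, _⟩ | ⟨ha, hb⟩
      · exact h
      · exfalso
        have hadj := supFn_adj hl1
        rw [hb] at hadj
        exact no_adj_leaves hT.isConnected hn hl1 hl2 hadj
    have hsub : P.image (fun p : V × V => s(p.1, p.2)) ∪
        Q.image (fun l => s(l, supFn G l)) ⊆ G.edgeFinset := by
      intro e he
      rcases Finset.mem_union.mp he with h | h
      · obtain ⟨p, hp, rfl⟩ := Finset.mem_image.mp h
        rw [hPmem] at hp
        simp only [SimpleGraph.mem_edgeFinset, SimpleGraph.mem_edgeSet]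
        have := (Finset.mem_inter.mp hp.2).1
        rwa [SimpleGraph.mem_neighborFinset] at this
      · obtain ⟨l, hl, rfl⟩ := Finset.mem_image.mp h
        rw [hQ, Finset.mem_filter] at hl
        simp only [SimpleGraph.mem_edgeFinset, SimpleGraph.mem_edgeSet]
        exact supFn_adj (mem_leaves.mp hl.1)
    have hdisj : Disjoint (P.image (fun p : V × V => s(p.1, p.2)))
        (Q.image (fun l => s(l, supFn G l))) := by
      rw [Finset.disjoint_left]
      intro e he1 he2
      obtain ⟨p, hp, rfl⟩ := Finset.mem_image.mp he1
      obtain ⟨l, hl, heq⟩ := Finset.mem_image.mp he2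
      rw [hPmem] at hp
      rw [hQ, Finset.mem_filter] at hl
      have hp1 : p.1 ∉ D := (hmemA _).mp hp.1
      simp only [Sym2.eq_iff] at heq
      rcases heq with ⟨h1, _⟩ | ⟨_, h2⟩
      · exact hp1 (h1 ▸ hl.2.1)
      · exact hp1 (h2 ▸ hl.2.2)
    have hcard1 : (P.image (fun p : V × V => s(p.1, p.2))).card = P.card :=
      Finset.card_image_of_injOn f1inj
    have hcard2 : (Q.image (fun l => s(l, supFn G l))).card = Q.card :=
      Finset.card_image_of_injOn f2inj
    have hle : P.card + Q.card ≤ G.edgeFinset.card := by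
      rw [← hcard1, ← hcard2, ← Finset.card_union_of_disjoint hdisj]
      exact Finset.card_le_card hsub
    have hE := hT.card_edgeFinset
    omega
  have hQlow : ∑ s ∈ SD, (k s - 1) ≤ Q.card := by
    have hfq : Q.card = ∑ s ∈ SD, (Q.filter (fun l => supFn G l = s)).card := by
      apply Finset.card_eq_sum_card_fiberwise
      intro l hl
      simp only [Finset.mem_coe, hQ, Finset.mem_filter] at hl
      exact Finset.mem_coe.mpr (Finset.mem_inter.mpr ⟨supFn_mem_supps hl.1, hl.2.2⟩)
    rw [hfq]
    apply Finset.sum_le_sum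
    intro s hs
    have hsD : s ∈ D := (Finset.mem_inter.mp hs).2
    have hsplit : fib G s ⊆ Q.filter (fun l => supFn G l = s) ∪ (fib G s \ D) := by
      intro l hl
      by_cases hlD : l ∈ D
      · apply Finset.mem_union_left
        rw [Finset.mem_filter, hQ, Finset.mem_filter]
        have hm := mem_fib.mp hl
        exact ⟨⟨mem_leaves.mpr hm.1, hlD, by rw [hm.2]; exact hsD⟩, hm.2⟩
      · exact Finset.mem_union_right _ (Finset.mem_sdiff.mpr ⟨hl, hlD⟩)
    have h1 := Finset.card_le_card hsplit
    have h2 := Finset.card_union_le (Q.filter (fun l => supFn G l = s)) (fib G s \ D)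
    have h3 := hG1 s hsD
    have hks : k s = (fib G s).card := rfl
    omega
  set cf : V → ℕ := fun x => if x ∈ supps G then max 1 (k x - 1) else 1 with hcf
  have hPlow : A1.card + A2.card + ∑ x ∈ A2, cf x ≤ P.card := by
    rw [hPcard, ← hunionA, Finset.sum_union hdisA12]
    have hs1 : ∑ x ∈ A1, (t x).card = A1.card := by
      rw [Finset.sum_congr rfl (fun x hx => (mem_filter.mp hx).2), Finset.sum_const,
        smul_eq_mul, mul_one]
    have hs2 : ∑ x ∈ A2, (1 + cf x) ≤ ∑ x ∈ A2, (t x).card := by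
      apply Finset.sum_le_sum
      intro x hx
      have h2 : 2 ≤ (t x).card := (mem_filter.mp hx).2
      by_cases hxs : x ∈ supps G
      · have hkle : k x ≤ (t x).card := Finset.card_le_card (hfib_sub_t x (hA2D x hx))
        have hcfx : cf x = max 1 (k x - 1) := by rw [hcf]; simp [hxs]
        rw [hcfx]
        have hmax : max 1 (k x - 1) ≤ (t x).card - 1 := max_le (by omega) (by omega)
        omega
      · have hcfx : cf x = 1 := by rw [hcf]; simp [hxs]
        omega
    have hs3 : ∑ x ∈ A2, (1 + cf x) = A2.card + ∑ x ∈ A2, cf x := by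
      rw [Finset.sum_add_distrib, Finset.sum_const, smul_eq_mul, mul_one]
    omega
  have hA2sub : SA2 ⊆ A2 := fun s hs => (Finset.mem_inter.mp hs).2
  have hcfsplit : ∑ x ∈ A2, cf x = ∑ x ∈ SA2, cf x + ∑ x ∈ A2 \ SA2, cf x := by
    rw [← Finset.sum_union Finset.disjoint_sdiff, Finset.union_sdiff_of_subset hA2sub]
  have hcfSA2 : ∑ s ∈ SA2, (k s - 1) ≤ ∑ x ∈ SA2, cf x := by
    apply Finset.sum_le_sum
    intro s hs
    have hxs : s ∈ supps G := (Finset.mem_inter.mp hs).1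
    have hcfx : cf s = max 1 (k s - 1) := by rw [hcf]; simp [hxs]
    rw [hcfx]
    exact le_max_right _ _
  have hcfrest : ∑ x ∈ A2 \ SA2, cf x = (A2 \ SA2).card := by
    have hone : ∀ x ∈ A2 \ SA2, cf x = 1 := by
      intro x hx
      have hx' := Finset.mem_sdiff.mp hx
      have hxs : x ∉ supps G := fun h => hx'.2 (Finset.mem_inter.mpr ⟨h, hx'.1⟩)
      rw [hcf]; simp [hxs]
    rw [Finset.sum_congr rfl hone, Finset.sum_const, smul_eq_mul, mul_one]
  have hsdcard : (A2 \ SA2).card + SA2.card = A2.card :=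
    Finset.card_sdiff_add_card_eq_card hA2sub
  -- the injection into D
  set d : V → V := fun x => if h : (t x).Nonempty then h.choose else x with hd
  have hdspec : ∀ x ∈ A1, t x = {d x} ∧ d x ∈ D := by
    intro x hx
    have hc : (t x).card = 1 := (mem_filter.mp hx).2
    have hne : (t x).Nonempty := Finset.card_pos.mp (by omega)
    have hdm : d x ∈ t x := by rw [hd]; simp only [dif_pos hne]; exact hne.choose_spec
    have hsing : t x = {d x} := by
      obtain ⟨a, ha⟩ := Finset.card_eq_one.mp hc
      rw [ha] at hdm ⊢
      rw [Finset.mem_singleton] at hdm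
      rw [hdm]
    exact ⟨hsing, (Finset.mem_inter.mp hdm).2⟩
  have hpickE : ∀ s ∈ supps G, s ∉ D → pick G D s ∈ fib G s ∧ pick G D s ∈ D := by
    intro s hs hsD
    have hempty : ¬ ((fib G s) \ D).Nonempty := by
      rw [Finset.nonempty_iff_ne_empty, ne_eq, not_not, Finset.sdiff_eq_empty_iff_subset]
      intro l hl
      exact hfibD s hsD l hl
    have hne2 : (fib G s).Nonempty := fib_nonempty hs
    have hpk : pick G D s = hne2.choose := by
      simp only [pick, dif_neg hempty, dif_pos hne2]
    rw [hpk]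
    exact ⟨hne2.choose_spec, hfibD s hsD _ hne2.choose_spec⟩
  set E3 : V → Finset V := fun s => ((fib G s) ∩ D).erase (pick G D s) with hE3
  have hE3sub : ∀ s, E3 s ⊆ fib G s ∩ D := fun s => Finset.erase_subset _ _
  have hE3card : ∀ s ∈ supps G, k s - 1 ≤ (E3 s).card := by
    intro s hs
    by_cases hne : ((fib G s) \ D).Nonempty
    · have hpick : pick G D s ∈ fib G s \ D := by
        simp only [pick, dif_pos hne]
        exact hne.choose_spec
      have hsD : s ∈ D := by
        have hm := Finset.mem_sdiff.mp hpick
        have hf := mem_fib.mp hm.1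
        have := hleafD _ hf.1 hm.2
        rwa [hf.2] at this
      have hnotin : pick G D s ∉ fib G s ∩ D := fun hmem =>
        (Finset.mem_sdiff.mp hpick).2 (Finset.mem_inter.mp hmem).2
      have heq : E3 s = fib G s ∩ D := Finset.erase_eq_of_notMem hnotin
      have hcards : (fib G s ∩ D).card + (fib G s \ D).card = (fib G s).card :=
        Finset.card_inter_add_card_sdiff _ _
      have h3 := hG1 s hsD
      have hks : k s = (fib G s).card := rfl
      rw [heq]
      omega
    · have hfibsub : fib G s ⊆ D := by
        intro l hl
        by_contra hlD
        exact hne ⟨l, Finset.mem_sdiff.mpr ⟨hl, hlD⟩⟩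
      have hinter : fib G s ∩ D = fib G s := Finset.inter_eq_left.mpr hfibsub
      have hne2 : (fib G s).Nonempty := fib_nonempty hs
      have hpick : pick G D s ∈ fib G s := by
        simp only [pick, dif_neg hne, dif_pos hne2]
        exact hne2.choose_spec
      have hcard : (E3 s).card = (fib G s).card - 1 := by
        show ((fib G s ∩ D).erase (pick G D s)).card = (fib G s).card - 1
        rw [hinter, Finset.card_erase_of_mem hpick]
      have hks : k s = (fib G s).card := rfl
      omega
  have hinjd : Set.InjOn d A1 := by
    intro x hx y hy hxy
    rw [Finset.mem_coe] at hx hy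
    by_contra hne
    exact h_loc x (hA1D x hx) y (hA1D y hy) hne
      (show t x = t y by rw [(hdspec x hx).1, (hdspec y hy).1, hxy])
  have hinjp : Set.InjOn (pick G D) SA2 := by
    intro x hx y hy hxy
    rw [Finset.mem_coe] at hx hy
    have hx1 := hpickE x (mem_inter.mp hx).1 (hA2D x (mem_inter.mp hx).2)
    have hy1 := hpickE y (mem_inter.mp hy).1 (hA2D y (mem_inter.mp hy).2)
    have ex := (mem_fib.mp hx1.1).2
    have ey := (mem_fib.mp hy1.1).2
    rw [← ex, ← ey, hxy]
  set R : Finset V := (A1.image d) ∪ ((SA2.image (pick G D)) ∪ ((SD ∪ SA2).biUnion E3))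
    with hR
  have hfib_of_E3 : ∀ sv y, y ∈ E3 sv → y ∈ fib G sv := fun sv y hy =>
    (Finset.mem_inter.mp (hE3sub sv hy)).1
  have hRsub : R ⊆ D := by
    intro y hy
    rw [hR] at hy
    rcases Finset.mem_union.mp hy with h | h
    · obtain ⟨x, hx, rfl⟩ := Finset.mem_image.mp h
      exact (hdspec x hx).2
    rcases Finset.mem_union.mp h with h | h
    · obtain ⟨sv, hsv, rfl⟩ := Finset.mem_image.mp h
      exact (hpickE sv (mem_inter.mp hsv).1 (hA2D sv (mem_inter.mp hsv).2)).2
    · obtain ⟨sv, hsv, hy'⟩ := Finset.mem_biUnion.mp h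
      exact (Finset.mem_inter.mp (hE3sub sv hy')).2
  have hdisE3 : ∀ x ∈ SD ∪ SA2, ∀ y ∈ SD ∪ SA2, x ≠ y → Disjoint (E3 x) (E3 y) := by
    intro x _ y _ hxy
    rw [Finset.disjoint_left]
    intro l hlx hly
    have h1 := (mem_fib.mp (hfib_of_E3 x l hlx)).2
    have h2 := (mem_fib.mp (hfib_of_E3 y l hly)).2
    exact hxy (by rw [← h1, h2])
  have hdisSDSA2 : Disjoint SD SA2 := Finset.disjoint_left.mpr
    (fun s hs hs' => hA2D s (mem_inter.mp hs').2 (mem_inter.mp hs).2)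
  have hbUcard : ((SD ∪ SA2).biUnion E3).card = ∑ sv ∈ SD ∪ SA2, (E3 sv).card :=
    Finset.card_biUnion hdisE3
  have hdis2 : Disjoint (SA2.image (pick G D)) ((SD ∪ SA2).biUnion E3) := by
    rw [Finset.disjoint_left]
    intro y hy1 hy2
    obtain ⟨s0, hs0, rfl⟩ := Finset.mem_image.mp hy1
    obtain ⟨sv, hsv, hy'⟩ := Finset.mem_biUnion.mp hy2
    have hp := hpickE s0 (mem_inter.mp hs0).1 (hA2D s0 (mem_inter.mp hs0).2)
    have h1 := (mem_fib.mp hp.1).2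
    have h2 := (mem_fib.mp (hfib_of_E3 sv _ hy')).2
    have hsveq : sv = s0 := by rw [← h2, h1]
    subst hsveq
    exact Finset.notMem_erase _ _ hy'
  have hdis1 : Disjoint (A1.image d)
      ((SA2.image (pick G D)) ∪ ((SD ∪ SA2).biUnion E3)) := by
    rw [Finset.disjoint_left]
    intro y hy1 hy2
    obtain ⟨x, hx, rfl⟩ := Finset.mem_image.mp hy1
    have hdx := hdspec x hx
    have hdxt : d x ∈ t x := by rw [hdx.1]; exact Finset.mem_singleton_self _
    have hadj : G.Adj x (d x) := by
      have := (Finset.mem_inter.mp hdxt).1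
      rwa [SimpleGraph.mem_neighborFinset] at this
    have hexists : ∃ sv, sv ∈ SD ∪ SA2 ∧ d x ∈ fib G sv := by
      rcases Finset.mem_union.mp hy2 with h | h
      · obtain ⟨s0, hs0, heq⟩ := Finset.mem_image.mp h
        refine ⟨s0, Finset.mem_union_right _ hs0, ?_⟩
        rw [← heq]
        exact (hpickE s0 (mem_inter.mp hs0).1 (hA2D s0 (mem_inter.mp hs0).2)).1
      · obtain ⟨sv, hsv, hy'⟩ := Finset.mem_biUnion.mp h
        exact ⟨sv, hsv, hfib_of_E3 sv _ hy'⟩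
    obtain ⟨sv, hsv, hfibm⟩ := hexists
    have hm := mem_fib.mp hfibm
    have hxsup : x = supFn G (d x) := supFn_unique hm.1 hadj.symm
    have hxsv : sv = x := by rw [← hm.2, ← hxsup]
    subst hxsv
    rcases Finset.mem_union.mp hsv with h | h
    · exact hA1D _ hx (mem_inter.mp h).2
    · exact (Finset.disjoint_left.mp hdisA12) hx (mem_inter.mp h).2
  have hc1 : (A1.image d).card = A1.card := Finset.card_image_of_injOn hinjd
  have hc2 : (SA2.image (pick G D)).card = SA2.card := Finset.card_image_of_injOn hinjp
  have hRcard : R.card = A1.card + (SA2.card + ∑ sv ∈ SD ∪ SA2, (E3 sv).card) := by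
    rw [hR, Finset.card_union_of_disjoint hdis1, Finset.card_union_of_disjoint hdis2,
      hc1, hc2, hbUcard]
  have hsumE3 : ∑ s ∈ SD, (k s - 1) + ∑ s ∈ SA2, (k s - 1) ≤
      ∑ sv ∈ SD ∪ SA2, (E3 sv).card := by
    rw [Finset.sum_union hdisSDSA2]
    apply Nat.add_le_add
    · exact Finset.sum_le_sum (fun s hs => hE3card s (mem_inter.mp hs).1)
    · exact Finset.sum_le_sum (fun s hs => hE3card s (mem_inter.mp hs).1)
  have hB2 : A1.card + SA2.card +
      (∑ s ∈ SD, (k s - 1) + ∑ s ∈ SA2, (k s - 1)) ≤ D.card := by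
    have := Finset.card_le_card hRsub
    omega
  -- final arithmetic
  omega

end Aux

theorem stmt17 [DecidableEq V] [Fintype V] (G : SimpleGraph V) [DecidableRel G.Adj]
    (hT : G.IsTree) (hn : 4 ≤ Fintype.card V) :
    Fintype.card V + 1 + 2 * (univ.filter fun v : V => G.degree v = 1).card ≤
      3 * gammaLD G +
        2 * (univ.filter fun v : V => ∃ u, G.Adj v u ∧ G.degree u = 1).card := by
  have hne : {k | ∃ D : Finset V, IsLD G D ∧ D.card = k}.Nonempty := by
    refine ⟨(univ : Finset V).card, univ, ⟨?_, ?_⟩, rfl⟩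
    · intro x; exact ⟨x, by simp⟩
    · intro x hx; simp at hx
  obtain ⟨D, hD, hcard⟩ := Nat.sInf_mem hne
  have := key_bound G hT hn D hD
  rw [gammaLD, ← hcard]
  exact this
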